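/- Let z0 lie in the upper half-plane H with Re(z0) = 0. Then the value range for inverse functions V*_𝓘(z0) = {w ∈ H : f(w) = z0 for some f ∈ 𝓘} equals the half-open vertical segment {z0 − i·t : t ∈ [0, Im(z0))}. -/

import Mathlib

open Complex Set Filter Topology

noncomputable section

/-- The upper half-plane. -/
def UHP : Set ℂ := {z : ℂ | 0 < z.im}

/-- Hydrodynamic normalization at infinity: there is `c ≥ 0` (the half-plane capacity)
such that `z * (f z - z) → -c` as `|z| → ∞` within each sector `{Im z ≥ ε * |z|}`. -/
def HydroNorm (f : ℂ → ℂ) : Prop :=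
  ∃ c : ℝ, 0 ≤ c ∧ ∀ ε : ℝ, 0 < ε →
    Tendsto (fun z : ℂ => z * (f z - z))
      (comap (fun z : ℂ => ‖z‖) atTop ⊓ 𝓟 {z : ℂ | ε * ‖z‖ ≤ z.im})
      (𝓝 (-(c : ℂ)))

/-- The class `𝓗` of univalent self-maps of the upper half-plane with
hydrodynamic normalization. -/
def ClassH (f : ℂ → ℂ) : Prop :=
  DifferentiableOn ℂ f UHP ∧ InjOn f UHP ∧ MapsTo f UHP UHP ∧ HydroNorm f

/-- The class `𝓘` of maps in `𝓗` symmetric w.r.t. the imaginary axis. -/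
def ClassI (f : ℂ → ℂ) : Prop :=
  ClassH f ∧ ∀ z ∈ UHP, f (-(starRingEnd ℂ) z) = -(starRingEnd ℂ) (f z)

/-- The value range for inverse functions `V*_𝓘(z0)`. -/
def VIstar (z0 : ℂ) : Set ℂ :=
  {w : ℂ | w ∈ UHP ∧ ∃ f : ℂ → ℂ, ClassI f ∧ f w = z0}

lemma isOpen_UHP : IsOpen UHP := isOpen_lt continuous_const Complex.continuous_im

/-- principal square root of a point in the upper half-plane lies in the open first quadrant -/
lemma sqrtQ1 {z : ℂ} (hz : 0 < z.im) : 0 < (z ^ (1/2 : ℂ)).re ∧ 0 < (z ^ (1/2 : ℂ)).im := by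
  have hz0 : z ≠ 0 := by
    intro h; rw [h] at hz; simp at hz
  have habs : 0 < ‖z‖ := norm_pos_iff.mpr hz0
  have harg1 : 0 < Complex.arg z := by
    rw [Complex.arg_of_im_pos hz]
    refine Real.arccos_pos.2 ?_
    have h1 : |z.re| < ‖z‖ := Complex.abs_re_lt_norm.2 (ne_of_gt hz)
    rw [div_lt_one habs]
    exact lt_of_le_of_lt (le_abs_self _) h1
  have harg2 : Complex.arg z < Real.pi := Complex.arg_lt_pi_iff.2 (Or.inr (ne_of_gt hz))
  rw [Complex.cpow_def_of_ne_zero hz0]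
  have him : (Complex.log z * (1/2 : ℂ)).im = Complex.arg z / 2 := by
    simp [Complex.mul_im, Complex.log_im]
    ring
  have hcos : 0 < Real.cos ((Complex.log z * (1/2 : ℂ)).im) := by
    rw [him]
    apply Real.cos_pos_of_mem_Ioo
    have := Real.pi_pos
    refine Set.mem_Ioo.2 ⟨by nlinarith, by nlinarith⟩
  have hsin : 0 < Real.sin ((Complex.log z * (1/2 : ℂ)).im) := by
    rw [him]
    apply Real.sin_pos_of_pos_of_lt_pi
    · nlinarith
    · have := Real.pi_pos; nlinarith
  constructor
  · rw [Complex.exp_re]; positivity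
  · rw [Complex.exp_im]; positivity

lemma sqrt_mul_self {z : ℂ} (hz : z ≠ 0) : z ^ (1/2 : ℂ) * z ^ (1/2 : ℂ) = z := by
  rw [← Complex.cpow_add _ _ hz]
  norm_num

lemma eq_of_sq_eq_sq_im {x y : ℂ} (hx : 0 < x.im) (hy : 0 < y.im) (h : x * x = y * y) :
    x = y := by
  have h0 : (x - y) * (x + y) = 0 := by linear_combination h
  rcases mul_eq_zero.1 h0 with h1 | h1
  · exact sub_eq_zero.1 h1
  · exfalso
    have : x = -y := by linear_combination h1
    rw [this] at hx
    simp at hx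
    linarith

lemma eq_sqrt {v x : ℂ} (hv : 0 < v.im) (hsq : x * x = v) (hre : 0 < x.re) :
    x = v ^ (1/2 : ℂ) := by
  have hv0 : v ≠ 0 := by intro h; rw [h] at hv; simp at hv
  have h1 := sqrtQ1 hv
  have hs : v ^ (1/2 : ℂ) * v ^ (1/2 : ℂ) = v := sqrt_mul_self hv0
  have h0 : (x - v ^ (1/2 : ℂ)) * (x + v ^ (1/2 : ℂ)) = 0 := by
    linear_combination hsq - hs
  rcases mul_eq_zero.1 h0 with h2 | h2
  · exact sub_eq_zero.1 h2
  · exfalso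
    have : x = -(v ^ (1/2 : ℂ)) := by linear_combination h2
    rw [this] at hre
    simp at hre
    linarith [h1.1]

lemma sqrt_neg_conj {z : ℂ} (hz : 0 < z.im) :
    (-(starRingEnd ℂ) z) ^ (1/2 : ℂ) = Complex.I * (starRingEnd ℂ) (z ^ (1/2 : ℂ)) := by
  have hz0 : z ≠ 0 := by intro h; rw [h] at hz; simp at hz
  have him : 0 < (-(starRingEnd ℂ) z).im := by simpa using hz
  refine (eq_sqrt him ?_ ?_).symm
  · have : (starRingEnd ℂ) (z ^ (1/2 : ℂ)) * (starRingEnd ℂ) (z ^ (1/2 : ℂ))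
        = (starRingEnd ℂ) z := by
      rw [← map_mul, sqrt_mul_self hz0]
    calc Complex.I * (starRingEnd ℂ) (z ^ (1/2 : ℂ)) *
          (Complex.I * (starRingEnd ℂ) (z ^ (1/2 : ℂ)))
        = (Complex.I * Complex.I) *
          ((starRingEnd ℂ) (z ^ (1/2 : ℂ)) * (starRingEnd ℂ) (z ^ (1/2 : ℂ))) := by ring
      _ = -(starRingEnd ℂ) z := by rw [Complex.I_mul_I, this]; ring
  · have h1 := sqrtQ1 hz
    have hre : (Complex.I * (starRingEnd ℂ) (z ^ (1/2 : ℂ))).re = (z ^ (1/2 : ℂ)).im := by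
      simp [Complex.mul_re]
    rw [hre]
    exact h1.2

/-- the vertical-slit map `z ↦ √(z-h)·√(z+h)` -/
def slitMap (h : ℝ) (z : ℂ) : ℂ := (z - (h : ℂ)) ^ (1/2 : ℂ) * (z + (h : ℂ)) ^ (1/2 : ℂ)

lemma slitMap_im_pos {h : ℝ} {z : ℂ} (hz : 0 < z.im) : 0 < (slitMap h z).im := by
  have h1 : 0 < (z - (h : ℂ)).im := by simpa using hz
  have h2 : 0 < (z + (h : ℂ)).im := by simpa using hz
  have q1 := sqrtQ1 h1
  have q2 := sqrtQ1 h2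
  rw [slitMap, Complex.mul_im]
  nlinarith [q1.1, q1.2, q2.1, q2.2]

lemma slitMap_sq {h : ℝ} {z : ℂ} (hz : 0 < z.im) :
    slitMap h z * slitMap h z = z ^ 2 - (h : ℂ) ^ 2 := by
  have h1 : z - (h : ℂ) ≠ 0 := by
    intro hc
    have : (z - (h : ℂ)).im = 0 := by rw [hc]; simp
    simp at this; simp [this] at hz
  have h2 : z + (h : ℂ) ≠ 0 := by
    intro hc
    have : (z + (h : ℂ)).im = 0 := by rw [hc]; simp
    simp at this; simp [this] at hz
  have e1 := sqrt_mul_self h1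
  have e2 := sqrt_mul_self h2
  calc slitMap h z * slitMap h z
      = ((z - (h : ℂ)) ^ (1/2 : ℂ) * (z - (h : ℂ)) ^ (1/2 : ℂ)) *
        ((z + (h : ℂ)) ^ (1/2 : ℂ) * (z + (h : ℂ)) ^ (1/2 : ℂ)) := by rw [slitMap]; ring
    _ = (z - (h : ℂ)) * (z + (h : ℂ)) := by rw [e1, e2]
    _ = z ^ 2 - (h : ℂ) ^ 2 := by ring

lemma slitMap_diff (h : ℝ) : DifferentiableOn ℂ (slitMap h) UHP := by
  intro z hz
  have hz' : 0 < z.im := hz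
  have h1 : z - (h : ℂ) ∈ Complex.slitPlane := by
    rw [Complex.mem_slitPlane_iff]
    right
    simpa using ne_of_gt hz'
  have h2 : z + (h : ℂ) ∈ Complex.slitPlane := by
    rw [Complex.mem_slitPlane_iff]
    right
    simpa using ne_of_gt hz'
  have d1 : DifferentiableAt ℂ (fun z : ℂ => (z - (h : ℂ)) ^ (1/2 : ℂ)) z :=
    ((differentiableAt_id.sub_const _).cpow (differentiableAt_const _) h1)
  have d2 : DifferentiableAt ℂ (fun z : ℂ => (z + (h : ℂ)) ^ (1/2 : ℂ)) z :=
    ((differentiableAt_id.add_const _).cpow (differentiableAt_const _) h2)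
  exact (d1.mul d2).differentiableWithinAt

lemma slitMap_injOn (h : ℝ) : InjOn (slitMap h) UHP := by
  intro z hz w hw hzw
  have hz' : 0 < z.im := hz
  have hw' : 0 < w.im := hw
  have h1 : z ^ 2 - (h : ℂ) ^ 2 = w ^ 2 - (h : ℂ) ^ 2 := by
    rw [← slitMap_sq hz', ← slitMap_sq hw', hzw]
  have h2 : z * z = w * w := by linear_combination h1
  exact eq_of_sq_eq_sq_im hz' hw' h2

lemma slitMap_symm (h : ℝ) : ∀ z ∈ UHP,
    slitMap h (-(starRingEnd ℂ) z) = -(starRingEnd ℂ) (slitMap h z) := by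
  intro z hz
  have hz' : 0 < z.im := hz
  have h1 : 0 < (z + (h : ℂ)).im := by simpa using hz'
  have h2 : 0 < (z - (h : ℂ)).im := by simpa using hz'
  have e1 : -(starRingEnd ℂ) z - (h : ℂ) = -(starRingEnd ℂ) (z + (h : ℂ)) := by
    simp [map_add, Complex.conj_ofReal]; ring
  have e2 : -(starRingEnd ℂ) z + (h : ℂ) = -(starRingEnd ℂ) (z - (h : ℂ)) := by
    simp [map_sub, Complex.conj_ofReal]; ring
  rw [slitMap, e1, e2, sqrt_neg_conj h1, sqrt_neg_conj h2]
  rw [slitMap]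
  calc Complex.I * (starRingEnd ℂ) ((z + (h:ℂ)) ^ (1/2:ℂ)) *
        (Complex.I * (starRingEnd ℂ) ((z - (h:ℂ)) ^ (1/2:ℂ)))
      = (Complex.I * Complex.I) *
        ((starRingEnd ℂ) ((z + (h:ℂ)) ^ (1/2:ℂ)) * (starRingEnd ℂ) ((z - (h:ℂ)) ^ (1/2:ℂ))) := by
        ring
    _ = -(starRingEnd ℂ) ((z - (h:ℂ)) ^ (1/2:ℂ) * (z + (h:ℂ)) ^ (1/2:ℂ)) := by
        rw [Complex.I_mul_I, ← map_mul]; ring_nf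

lemma slitMap_hydro (h : ℝ) : HydroNorm (slitMap h) := by
  refine ⟨h ^ 2 / 2, by positivity, ?_⟩
  intro ε hε
  set Fε := comap (fun z : ℂ => ‖z‖) atTop ⊓ 𝓟 {z : ℂ | ε * ‖z‖ ≤ z.im}
    with hFε
  have habs : Tendsto (fun z : ℂ => ‖z‖) Fε atTop :=
    tendsto_comap.mono_left inf_le_left
  have hev1 : ∀ R : ℝ, ∀ᶠ z : ℂ in Fε, R ≤ ‖z‖ := fun R =>
    habs.eventually (eventually_ge_atTop R)
  have hsec : ∀ᶠ z : ℂ in Fε, ε * ‖z‖ ≤ z.im := by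
    have : {z : ℂ | ε * ‖z‖ ≤ z.im} ∈ Fε :=
      mem_inf_of_right (mem_principal_self _)
    filter_upwards [this] with z hz using hz
  have hbasic : ∀ᶠ z : ℂ in Fε, 0 < z.im ∧ 1 ≤ ‖z‖ := by
    filter_upwards [hev1 1, hsec] with z h1 h2
    exact ⟨by nlinarith, h1⟩
  have hinv0 : Tendsto (fun z : ℂ => z⁻¹) Fε (𝓝 0) := by
    rw [tendsto_zero_iff_norm_tendsto_zero]
    have := tendsto_inv_atTop_zero.comp habs
    simpa [Function.comp_def] using this
  -- q z := slitMap h z * z⁻¹ tends to 1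
  have hu : Tendsto (fun z : ℂ => 1 - (h : ℂ) ^ 2 * (z⁻¹ * z⁻¹)) Fε (𝓝 1) := by
    have : Tendsto (fun z : ℂ => (h : ℂ) ^ 2 * (z⁻¹ * z⁻¹)) Fε (𝓝 ((h : ℂ)^2 * (0 * 0))) :=
      (hinv0.mul hinv0).const_mul _
    have h2 : Tendsto (fun z : ℂ => 1 - (h : ℂ) ^ 2 * (z⁻¹ * z⁻¹)) Fε
        (𝓝 (1 - (h : ℂ)^2 * (0 * 0))) := this.const_sub 1
    simpa using h2
  have hq2 : ∀ᶠ z : ℂ in Fε,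
      (slitMap h z * z⁻¹) * (slitMap h z * z⁻¹) = 1 - (h : ℂ) ^ 2 * (z⁻¹ * z⁻¹) := by
    filter_upwards [hbasic] with z hz
    have hz0 : z ≠ 0 := by
      intro hc; rw [hc] at hz; simp at hz
    have hsq := slitMap_sq (h := h) hz.1
    field_simp
    linear_combination hsq
  have hqq : Tendsto (fun z : ℂ => (slitMap h z * z⁻¹) * (slitMap h z * z⁻¹)) Fε (𝓝 1) :=
    hu.congr' (by filter_upwards [hq2] with z hz using hz.symm)
  have hq1 : Tendsto (fun z : ℂ => slitMap h z * z⁻¹) Fε (𝓝 1) := by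
    rw [Metric.tendsto_nhds]
    intro η hη
    have hη' : 0 < min η (min ε 1) := lt_min hη (lt_min hε one_pos)
    have hqq' := (Metric.tendsto_nhds.1 hqq) _ hη'
    filter_upwards [hqq', hbasic, hsec] with z hqz hz hsz
    set s := slitMap h z * z⁻¹ with hs
    have hz0 : z ≠ 0 := by
      intro hc; rw [hc] at hz; simp at hz
    have h1 : ‖s * s - 1‖ < min η (min ε 1) := by
      rwa [Complex.dist_eq] at hqz
    have himf : 0 < (slitMap h z).im := slitMap_im_pos hz.1
    rw [Complex.dist_eq]
    have hfactor : ‖s - 1‖ * ‖s + 1‖ = ‖s * s - 1‖ := by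
      rw [← norm_mul]
      congr 1
      ring
    by_cases hcase : 1 ≤ ‖s + 1‖
    · calc ‖s - 1‖
          ≤ ‖s - 1‖ * ‖s + 1‖ :=
            le_mul_of_one_le_right (norm_nonneg _) hcase
        _ = ‖s * s - 1‖ := hfactor
        _ < min η (min ε 1) := h1
        _ ≤ η := min_le_left _ _
    · exfalso
      push_neg at hcase
      have h2 : 1 ≤ ‖s - 1‖ := by
        have htri : ‖(s + 1) - (s - 1)‖ ≤
            ‖s + 1‖ + ‖s - 1‖ := by
          apply (norm_sub_le _ _).trans_eq ?_ |>.trans ?_ <;> try rfl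
        have : ‖(s + 1) - (s - 1)‖ = 2 := by norm_num
        linarith [norm_sub_le (s+1) (s-1), this]
      have h3 : ‖s + 1‖ < min ε 1 := by
        have : ‖s + 1‖ ≤ ‖s - 1‖ * ‖s + 1‖ :=
          le_mul_of_one_le_left (norm_nonneg _) h2
        calc ‖s + 1‖ ≤ ‖s - 1‖ * ‖s + 1‖ := this
          _ = ‖s * s - 1‖ := hfactor
          _ < min η (min ε 1) := h1
          _ ≤ min ε 1 := min_le_right _ _
      -- now contradiction with positivity of Im (slitMap h z)
      have hfz : slitMap h z = (s + 1) * z - z := by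
        rw [hs, add_mul, one_mul, add_sub_cancel_right, mul_assoc, inv_mul_cancel₀ hz0, mul_one]
      have him1 : ((s + 1) * z).im ≤ ‖s + 1‖ * ‖z‖ := by
        calc ((s + 1) * z).im ≤ |((s + 1) * z).im| := le_abs_self _
          _ ≤ ‖(s + 1) * z‖ := Complex.abs_im_le_norm _
          _ = ‖s + 1‖ * ‖z‖ := norm_mul _ _
      have habs1 : 1 ≤ ‖z‖ := hz.2
      have : (slitMap h z).im = ((s + 1) * z).im - z.im := by rw [hfz]; simp
      have hεabs : ε * ‖z‖ ≤ z.im := hsz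
      have hlt : ‖s + 1‖ < ε := lt_of_lt_of_le h3 (min_le_left _ _)
      nlinarith
  -- final limit
  have hfin : Tendsto (fun z : ℂ => -(h : ℂ) ^ 2 * (slitMap h z * z⁻¹ + 1)⁻¹) Fε
      (𝓝 (-(h : ℂ) ^ 2 * (1 + 1)⁻¹)) := by
    have h2 : Tendsto (fun z : ℂ => slitMap h z * z⁻¹ + 1) Fε (𝓝 (1 + 1)) :=
      hq1.add_const 1
    have h3 : Tendsto (fun z : ℂ => (slitMap h z * z⁻¹ + 1)⁻¹) Fε (𝓝 ((1 + 1 : ℂ))⁻¹) :=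
      h2.inv₀ (by norm_num)
    exact h3.const_mul _
  have hident : ∀ᶠ z : ℂ in Fε,
      -(h : ℂ) ^ 2 * (slitMap h z * z⁻¹ + 1)⁻¹ = z * (slitMap h z - z) := by
    filter_upwards [hbasic] with z hz
    have hz0 : z ≠ 0 := by
      intro hc; rw [hc] at hz; simp at hz
    have himf : 0 < (slitMap h z).im := slitMap_im_pos hz.1
    have hne : slitMap h z + z ≠ 0 := by
      intro hc
      have : (slitMap h z + z).im = 0 := by rw [hc]; simp
      simp at this
      linarith [hz.1]
    have hne2 : slitMap h z * z⁻¹ + 1 ≠ 0 := by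
      intro hc
      have : (slitMap h z + z) * z⁻¹ = 0 := by
        rw [add_mul]
        field_simp at hc ⊢
        linear_combination hc
      rcases mul_eq_zero.1 this with hc2 | hc2
      · exact hne hc2
      · exact hz0 (by simpa using hc2)
    have hsq := slitMap_sq (h := h) hz.1
    field_simp
    linear_combination -hsq
  have := hfin.congr' hident
  convert this using 2
  push_cast
  ring

/-- comparison of distances to a point and its conjugate -/
lemma abs_sub_lt_abs_sub_conj {u p : ℂ} (hu : 0 < u.im) (hp : 0 < p.im) :
    ‖u - p‖ < ‖u - (starRingEnd ℂ) p‖ := by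
  have h1 : Complex.normSq (u - p) < Complex.normSq (u - (starRingEnd ℂ) p) := by
    simp only [Complex.normSq_apply, Complex.sub_re, Complex.sub_im, Complex.conj_re,
      Complex.conj_im]
    nlinarith
  rw [Complex.norm_def, Complex.norm_def]
  exact Real.sqrt_lt_sqrt (Complex.normSq_nonneg _) h1

lemma sub_conj_ne_zero {u p : ℂ} (hu : 0 < u.im) (hp : 0 < p.im) :
    u - (starRingEnd ℂ) p ≠ 0 := by
  intro hc
  have : (u - (starRingEnd ℂ) p).im = 0 := by rw [hc]; simp
  simp [Complex.sub_im, Complex.conj_im] at this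
  linarith

/-- Schwarz–Pick inequality for holomorphic self-maps of the upper half-plane. -/
lemma schwarz_pick {f : ℂ → ℂ} (hd : DifferentiableOn ℂ f UHP) (hm : MapsTo f UHP UHP)
    {z w : ℂ} (hz : z ∈ UHP) (hw : w ∈ UHP) :
    ‖f z - f w‖ * ‖z - (starRingEnd ℂ) w‖ ≤
      ‖z - w‖ * ‖f z - (starRingEnd ℂ) (f w)‖ := by
  have hwim : 0 < w.im := hw
  have hzim : 0 < z.im := hz
  set p := f w with hp
  have hpU : p ∈ UHP := hm hw
  have hpim : 0 < p.im := hpU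
  set T : ℂ → ℂ := fun ζ => (w - (starRingEnd ℂ) w * ζ) / (1 - ζ) with hT
  -- T maps the unit disk into UHP
  have hTmaps : ∀ ζ : ℂ, ‖ζ‖ < 1 → T ζ ∈ UHP := by
    intro ζ hζ
    have hden : (1 : ℂ) - ζ ≠ 0 := by
      intro hc
      have : ζ = 1 := by linear_combination -hc
      rw [this] at hζ; simp at hζ
    have hns : 0 < Complex.normSq (1 - ζ) := Complex.normSq_pos.2 hden
    have hζ2 : ζ.re ^ 2 + ζ.im ^ 2 < 1 := by
      have h1 : Complex.normSq ζ < 1 := by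
        rw [← Complex.sq_norm]
        nlinarith [norm_nonneg ζ]
      rw [Complex.normSq_apply] at h1
      nlinarith
    show 0 < (T ζ).im
    rw [hT]
    simp only [Complex.div_im]
    rw [div_sub_div_same]
    apply div_pos ?_ hns
    simp only [Complex.sub_re, Complex.sub_im, Complex.mul_re, Complex.mul_im,
      Complex.conj_re, Complex.conj_im, Complex.one_re, Complex.one_im]
    nlinarith
  have hT0 : T 0 = w := by rw [hT]; simp
  set g : ℂ → ℂ := fun ζ => (f (T ζ) - p) / (f (T ζ) - (starRingEnd ℂ) p) with hg
  have hg0 : g 0 = 0 := by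
    rw [hg]; simp only []
    rw [hT0]
    simp [hp]
  have hgmaps : MapsTo g (Metric.ball (0 : ℂ) 1) (Metric.ball (g 0) 1) := by
    intro ζ hζ
    rw [hg0, Metric.mem_ball, Complex.dist_eq, sub_zero]
    rw [Metric.mem_ball, Complex.dist_eq, sub_zero] at hζ
    have hU := hTmaps ζ hζ
    have hfU : f (T ζ) ∈ UHP := hm hU
    have hfim : 0 < (f (T ζ)).im := hfU
    rw [hg]
    simp only []
    rw [norm_div]
    rw [div_lt_one (norm_pos_iff.mpr (sub_conj_ne_zero hfim hpim))]
    exact abs_sub_lt_abs_sub_conj hfim hpim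
  have hgdiff : DifferentiableOn ℂ g (Metric.ball (0 : ℂ) 1) := by
    intro ζ hζ
    rw [Metric.mem_ball, Complex.dist_eq, sub_zero] at hζ
    have hden : (1 : ℂ) - ζ ≠ 0 := by
      intro hc
      have : ζ = 1 := by linear_combination -hc
      rw [this] at hζ; simp at hζ
    have hTd : DifferentiableAt ℂ T ζ := by
      apply DifferentiableAt.div
      · exact (differentiableAt_const _).sub ((differentiableAt_const _).mul differentiableAt_id)
      · exact (differentiableAt_const _).sub differentiableAt_id
      · exact hden
    have hU := hTmaps ζ hζ
    have hfd : DifferentiableAt ℂ f (T ζ) := by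
      have := hd.differentiableAt (isOpen_UHP.mem_nhds hU)
      exact this
    have hfTd : DifferentiableAt ℂ (fun ζ => f (T ζ)) ζ := hfd.comp ζ hTd
    have hfU : f (T ζ) ∈ UHP := hm hU
    have hfim : 0 < (f (T ζ)).im := hfU
    exact ((hfTd.sub_const _).div (hfTd.sub_const _)
      (sub_conj_ne_zero hfim hpim)).differentiableWithinAt
  -- the point ζ₀
  set ζ₀ : ℂ := (z - w) / (z - (starRingEnd ℂ) w) with hζ₀
  have hζ₀mem : ζ₀ ∈ Metric.ball (0 : ℂ) 1 := by
    rw [Metric.mem_ball, Complex.dist_eq, sub_zero, hζ₀, norm_div]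
    rw [div_lt_one (norm_pos_iff.mpr (sub_conj_ne_zero hzim hwim))]
    exact abs_sub_lt_abs_sub_conj hzim hwim
  have hTζ₀ : T ζ₀ = z := by
    rw [hT, hζ₀]
    have hne1 : z - (starRingEnd ℂ) w ≠ 0 := sub_conj_ne_zero hzim hwim
    have hne2 : w - (starRingEnd ℂ) w ≠ 0 := by
      intro hc
      have : (w - (starRingEnd ℂ) w).im = 0 := by rw [hc]; simp
      simp [Complex.sub_im, Complex.conj_im] at this
      linarith
    have hden : (1 : ℂ) - (z - w) / (z - (starRingEnd ℂ) w) ≠ 0 := by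
      rw [sub_ne_zero]
      intro hc
      have := hc
      field_simp at this
      exact hne2 (by linear_combination this)
    field_simp
    rw [div_eq_iff (by rwa [sub_sub_sub_cancel_left])]
    ring
  have hSchwarz := Complex.dist_le_div_mul_dist_of_mapsTo_ball hgdiff (hgmaps.mono_right Metric.ball_subset_closedBall) hζ₀mem
  rw [hg0] at hSchwarz
  simp only [Complex.dist_eq, sub_zero, one_div_one, one_mul] at hSchwarz
  have hkey : ‖g ζ₀‖ ≤ ‖ζ₀‖ := hSchwarz
  rw [hg] at hkey
  simp only [] at hkey
  rw [hTζ₀, hζ₀] at hkey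
  rw [norm_div, norm_div] at hkey
  rw [div_le_div_iff₀ (norm_pos_iff.mpr (sub_conj_ne_zero (hm hz : f z ∈ UHP) hpim))
    (norm_pos_iff.mpr (sub_conj_ne_zero hzim hwim))] at hkey
  exact hkey

lemma normSq_sub_conj (u v : ℂ) :
    Complex.normSq (u - (starRingEnd ℂ) v) = Complex.normSq (u - v) + 4 * u.im * v.im := by
  simp only [Complex.normSq_apply, Complex.sub_re, Complex.sub_im, Complex.conj_re,
    Complex.conj_im]
  ring

lemma tendsto_invC : Tendsto (fun y : ℝ => ((y : ℝ) : ℂ)⁻¹) atTop (𝓝 0) := by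
  have h1 : Tendsto (fun y : ℝ => y⁻¹) atTop (𝓝 0) := tendsto_inv_atTop_zero
  have h2 := (Complex.continuous_ofReal.tendsto 0).comp h1
  simpa only [Function.comp_def, Complex.ofReal_inv, Complex.ofReal_zero] using h2

/-- Julia-type inequality: a self-map of UHP with `f(iy) - iy → 0` satisfies
`Im f(w) ≥ Im w`. -/
lemma im_le_im_of_hydro {f : ℂ → ℂ} (hd : DifferentiableOn ℂ f UHP)
    (hm : MapsTo f UHP UHP)
    (hδ : Tendsto (fun y : ℝ => f ((y : ℂ) * Complex.I) - (y : ℂ) * Complex.I) atTop (𝓝 0))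
    {w : ℂ} (hw : w ∈ UHP) : w.im ≤ (f w).im := by
  have hwim : 0 < w.im := hw
  have hpim : 0 < (f w).im := hm hw
  have hineq : ∀ᶠ y : ℝ in atTop,
      w.im * Complex.normSq ((f w - f ((y : ℂ) * Complex.I)) / (y : ℂ)) ≤
      (f w).im * ((f ((y : ℂ) * Complex.I) / (y : ℂ)).im *
        Complex.normSq ((w - (y : ℂ) * Complex.I) / (y : ℂ))) := by
    filter_upwards [eventually_ge_atTop (1 : ℝ)] with y hy
    have hy0 : (0 : ℝ) < y := lt_of_lt_of_le one_pos hy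
    have hyI : (y : ℂ) * Complex.I ∈ UHP := by
      show 0 < ((y : ℂ) * Complex.I).im
      simp [hy0]
    have hSP := schwarz_pick hd hm hw hyI
    have hnonneg1 : 0 ≤ ‖f w - f ((y:ℂ)*Complex.I)‖ *
        ‖w - (starRingEnd ℂ) ((y:ℂ)*Complex.I)‖ := by positivity
    have hsq : (‖f w - f ((y:ℂ)*Complex.I)‖ *
        ‖w - (starRingEnd ℂ) ((y:ℂ)*Complex.I)‖) ^ 2 ≤
        (‖w - (y:ℂ)*Complex.I‖ *
        ‖f w - (starRingEnd ℂ) (f ((y:ℂ)*Complex.I))‖) ^ 2 :=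
      pow_le_pow_left₀ hnonneg1 hSP 2
    rw [mul_pow, mul_pow, Complex.sq_norm, Complex.sq_norm, Complex.sq_norm,
      Complex.sq_norm, normSq_sub_conj, normSq_sub_conj] at hsq
    have hyim : ((y:ℂ)*Complex.I).im = y := by simp
    rw [hyim] at hsq
    have hkey : Complex.normSq (f w - f ((y:ℂ)*Complex.I)) * (w.im * y) ≤
        Complex.normSq (w - (y:ℂ)*Complex.I) *
          ((f w).im * (f ((y:ℂ)*Complex.I)).im) := by
      nlinarith [hsq]
    have hy3 : (0 : ℝ) < y ^ 3 := by positivity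
    have e1 : w.im * Complex.normSq ((f w - f ((y : ℂ) * Complex.I)) / (y : ℂ)) =
        (Complex.normSq (f w - f ((y:ℂ)*Complex.I)) * (w.im * y)) / y ^ 3 := by
      rw [map_div₀ Complex.normSq, Complex.normSq_ofReal]
      field_simp
    have e2 : (f w).im * ((f ((y : ℂ) * Complex.I) / (y : ℂ)).im *
        Complex.normSq ((w - (y : ℂ) * Complex.I) / (y : ℂ))) =
        (Complex.normSq (w - (y:ℂ)*Complex.I) *
          ((f w).im * (f ((y:ℂ)*Complex.I)).im)) / y ^ 3 := by
      rw [map_div₀ Complex.normSq, Complex.normSq_ofReal, Complex.div_ofReal_im]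
      field_simp
    rw [e1, e2, div_le_div_iff₀ hy3 hy3]
    nlinarith [hkey, hy3]
  have hev1 : ∀ᶠ y : ℝ in atTop, (1 : ℝ) ≤ y := eventually_ge_atTop 1
  have hq1 : Tendsto (fun y : ℝ => (f w - f ((y : ℂ) * Complex.I)) / (y : ℂ)) atTop
      (𝓝 (-Complex.I)) := by
    have heq : ∀ᶠ y : ℝ in atTop, (f w - f ((y : ℂ) * Complex.I)) / (y : ℂ) =
        f w * ((y : ℂ))⁻¹ - Complex.I -
        (f ((y : ℂ) * Complex.I) - (y : ℂ) * Complex.I) * ((y : ℂ))⁻¹ := by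
      filter_upwards [hev1] with y hy
      have hy0 : ((y : ℝ) : ℂ) ≠ 0 := by
        simp only [ne_eq, Complex.ofReal_eq_zero]; linarith
      field_simp
      try ring
    have h1 : Tendsto (fun y : ℝ => f w * ((y : ℂ))⁻¹ - Complex.I -
        (f ((y : ℂ) * Complex.I) - (y : ℂ) * Complex.I) * ((y : ℂ))⁻¹) atTop
        (𝓝 (f w * 0 - Complex.I - 0 * 0)) :=
      ((tendsto_invC.const_mul (f w)).sub_const _).sub (hδ.mul tendsto_invC)
    rw [show f w * 0 - Complex.I - 0 * 0 = -Complex.I by ring] at h1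
    exact h1.congr' (by filter_upwards [heq] with y hy using hy.symm)
  have hq2 : Tendsto (fun y : ℝ => f ((y : ℂ) * Complex.I) / (y : ℂ)) atTop
      (𝓝 Complex.I) := by
    have heq : ∀ᶠ y : ℝ in atTop, f ((y : ℂ) * Complex.I) / (y : ℂ) =
        Complex.I + (f ((y : ℂ) * Complex.I) - (y : ℂ) * Complex.I) * ((y : ℂ))⁻¹ := by
      filter_upwards [hev1] with y hy
      have hy0 : ((y : ℝ) : ℂ) ≠ 0 := by
        simp only [ne_eq, Complex.ofReal_eq_zero]; linarith
      field_simp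
      try ring
    have h1 : Tendsto (fun y : ℝ => Complex.I +
        (f ((y : ℂ) * Complex.I) - (y : ℂ) * Complex.I) * ((y : ℂ))⁻¹) atTop
        (𝓝 (Complex.I + 0 * 0)) := (hδ.mul tendsto_invC).const_add _
    rw [show Complex.I + (0 : ℂ) * 0 = Complex.I by ring] at h1
    exact h1.congr' (by filter_upwards [heq] with y hy using hy.symm)
  have hq3 : Tendsto (fun y : ℝ => (w - (y : ℂ) * Complex.I) / (y : ℂ)) atTop
      (𝓝 (-Complex.I)) := by
    have heq : ∀ᶠ y : ℝ in atTop, (w - (y : ℂ) * Complex.I) / (y : ℂ) =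
        w * ((y : ℂ))⁻¹ - Complex.I := by
      filter_upwards [hev1] with y hy
      have hy0 : ((y : ℝ) : ℂ) ≠ 0 := by
        simp only [ne_eq, Complex.ofReal_eq_zero]; linarith
      field_simp
    have h1 : Tendsto (fun y : ℝ => w * ((y : ℂ))⁻¹ - Complex.I) atTop
        (𝓝 (w * 0 - Complex.I)) := (tendsto_invC.const_mul w).sub_const _
    rw [show w * (0:ℂ) - Complex.I = -Complex.I by ring] at h1
    exact h1.congr' (by filter_upwards [heq] with y hy using hy.symm)
  have hnsI : Complex.normSq (-Complex.I) = 1 := by simp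
  have hLlim : Tendsto (fun y : ℝ =>
      w.im * Complex.normSq ((f w - f ((y : ℂ) * Complex.I)) / (y : ℂ))) atTop
      (𝓝 (w.im * 1)) := by
    have h1 := (Complex.continuous_normSq.tendsto (-Complex.I)).comp hq1
    rw [hnsI] at h1
    exact Tendsto.const_mul _ (by simpa only [Function.comp_def] using h1)
  have hRlim : Tendsto (fun y : ℝ =>
      (f w).im * ((f ((y : ℂ) * Complex.I) / (y : ℂ)).im *
        Complex.normSq ((w - (y : ℂ) * Complex.I) / (y : ℂ)))) atTop
      (𝓝 ((f w).im * (1 * 1))) := by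
    have hA := (Complex.continuous_im.tendsto Complex.I).comp hq2
    rw [Complex.I_im] at hA
    have hB := (Complex.continuous_normSq.tendsto (-Complex.I)).comp hq3
    rw [hnsI] at hB
    exact Tendsto.const_mul _ ((by simpa only [Function.comp_def] using hA : Tendsto _ _ _).mul
      (by simpa only [Function.comp_def] using hB))
  have hfinal : w.im * 1 ≤ (f w).im * (1 * 1) :=
    le_of_tendsto_of_tendsto hLlim hRlim hineq
  simpa using hfinal

theorem valueRange_inv_ClassI_imaginary_axis (z0 : ℂ) (hz0 : z0 ∈ UHP) (hre : z0.re = 0) :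
    VIstar z0 = {w : ℂ | ∃ t : ℝ, 0 ≤ t ∧ t < z0.im ∧ w = z0 - Complex.I * (t : ℂ)} := by
  have hb : 0 < z0.im := hz0
  ext w
  simp only [VIstar, Set.mem_setOf_eq]
  constructor
  · rintro ⟨hwU, f, ⟨⟨hd, hinj, hmaps, hhyd⟩, hsym⟩, hfw⟩
    have hwim : 0 < w.im := hwU
    -- step 1 : w.re = 0
    have hcwU : -(starRingEnd ℂ) w ∈ UHP := by
      show 0 < (-(starRingEnd ℂ) w).im
      simpa using hwim
    have hz0sym : -(starRingEnd ℂ) z0 = z0 := by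
      apply Complex.ext <;> simp [hre]
    have hfcw : f (-(starRingEnd ℂ) w) = f w := by
      rw [hsym w hwU, hfw, hz0sym]
    have hcw : -(starRingEnd ℂ) w = w := hinj hcwU hwU hfcw
    have hwre : w.re = 0 := by
      have := congrArg Complex.re hcw
      simp at this
      linarith
    -- step 2 : extract f(iy) - iy → 0
    obtain ⟨c, hc0, hlim⟩ := hhyd
    have hmap : Tendsto (fun y : ℝ => (y : ℂ) * Complex.I) atTop
        (comap (fun z : ℂ => ‖z‖) atTop ⊓
          𝓟 {z : ℂ | 1 * ‖z‖ ≤ z.im}) := by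
      rw [tendsto_inf]
      constructor
      · rw [tendsto_comap_iff]
        have : (fun y : ℝ => ‖(y : ℂ) * Complex.I‖) = fun y : ℝ => |y| := by
          funext y
          simp
        rw [show ((fun z : ℂ => ‖z‖) ∘ fun y : ℝ => (y : ℂ) * Complex.I) =
            fun y : ℝ => ‖(y : ℂ) * Complex.I‖ from rfl, this]
        exact tendsto_abs_atTop_atTop
      · rw [tendsto_principal]
        filter_upwards [eventually_ge_atTop (0 : ℝ)] with y hy
        simp [_root_.abs_of_nonneg hy]
    have hcomp := (hlim 1 one_pos).comp hmap
    have hinvyI : Tendsto (fun y : ℝ => ((y : ℂ) * Complex.I)⁻¹) atTop (𝓝 0) := by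
      have h1 : Tendsto (fun y : ℝ => ((y : ℂ))⁻¹ * Complex.I⁻¹) atTop
          (𝓝 (0 * Complex.I⁻¹)) := tendsto_invC.mul_const _
      rw [zero_mul] at h1
      exact h1.congr (fun y => (mul_inv ..).symm)
    have hδ : Tendsto (fun y : ℝ => f ((y : ℂ) * Complex.I) - (y : ℂ) * Complex.I) atTop
        (𝓝 0) := by
      have h1 : Tendsto (fun y : ℝ =>
          ((y : ℂ) * Complex.I * (f ((y : ℂ) * Complex.I) - (y : ℂ) * Complex.I)) *
            ((y : ℂ) * Complex.I)⁻¹) atTop (𝓝 ((-(c : ℂ)) * 0)) := hcomp.mul hinvyI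
      rw [mul_zero] at h1
      apply h1.congr'
      filter_upwards [eventually_ge_atTop (1 : ℝ)] with y hy
      have hy0 : ((y : ℝ) : ℂ) * Complex.I ≠ 0 := by
        apply mul_ne_zero _ Complex.I_ne_zero
        simp only [ne_eq, Complex.ofReal_eq_zero]
        linarith
      field_simp
      exact mul_div_cancel_left₀ _ (left_ne_zero_of_mul hy0)
    have him : w.im ≤ (f w).im := im_le_im_of_hydro hd hmaps hδ hwU
    rw [hfw] at him
    -- conclude
    refine ⟨z0.im - w.im, by linarith, by linarith, ?_⟩
    apply Complex.ext
    · simp [hwre, hre, Complex.mul_re]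
    · simp [Complex.mul_im]
  · rintro ⟨t, ht0, htb, hwt⟩
    set s : ℝ := z0.im - t with hs
    have hs0 : 0 < s := by simp [hs]; linarith
    have hsb : s ≤ z0.im := by simp [hs]; linarith
    have hwre : w.re = 0 := by
      rw [hwt]
      simp [Complex.mul_re, hre]
    have hwim : w.im = s := by
      rw [hwt]
      simp [Complex.mul_im, hs]
    have hwU : w ∈ UHP := by
      show 0 < w.im
      rw [hwim]; exact hs0
    have hnn : 0 ≤ z0.im ^ 2 - s ^ 2 := by nlinarith
    set h : ℝ := Real.sqrt (z0.im ^ 2 - s ^ 2) with hh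
    have hh2 : h ^ 2 = z0.im ^ 2 - s ^ 2 := Real.sq_sqrt hnn
    refine ⟨hwU, slitMap h, ⟨⟨slitMap_diff h, slitMap_injOn h,
      fun z hz => slitMap_im_pos hz, slitMap_hydro h⟩, slitMap_symm h⟩, ?_⟩
    have himfw : 0 < (slitMap h w).im := slitMap_im_pos hwU
    have hw' : w = (s : ℂ) * Complex.I := by
      apply Complex.ext <;> simp [hwre, hwim, Complex.mul_re, Complex.mul_im]
    have hz0' : z0 = ((z0.im : ℝ) : ℂ) * Complex.I := by
      apply Complex.ext <;> simp [hre, Complex.mul_re, Complex.mul_im]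
    have hcast : ((s : ℂ)) ^ 2 + ((h : ℂ)) ^ 2 = (((z0.im : ℝ) : ℂ)) ^ 2 := by
      have : (s : ℝ) ^ 2 + h ^ 2 = z0.im ^ 2 := by nlinarith [hh2]
      exact_mod_cast congrArg (fun x : ℝ => (x : ℂ)) this
    have hsqeq : slitMap h w * slitMap h w = z0 * z0 := by
      rw [slitMap_sq (show 0 < w.im from hwU), hw', hz0']
      linear_combination (-(h:ℂ)^2) * Complex.I_sq + Complex.I^2 * hcast
    exact eq_of_sq_eq_sq_im himfw hb hsqeq
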